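/- Let f : X → X be a minimal continuous self-map of a compact metric space such that every point of X is regularly recurrent. Then X is a periodic orbit or an odometer (i.e., f is topologically conjugate to an odometer). -/

import Mathlib

open Filter Topology Metric Set

/-- A periodic structure: a sequence of positive integers with `m j ∣ m (j+1)` and `m j → ∞`. -/
structure PeriodicStructure where
  m : ℕ → ℕ
  pos : ∀ j, 0 < m j
  dvd : ∀ j, m j ∣ m (j + 1)
  tendsto : Filter.Tendsto m Filter.atTop Filter.atTop

/-- The odometer space `X_m` of a periodic structure. -/
def PeriodicStructure.space (p : PeriodicStructure) : Type :=
  {x : ℕ → ℕ // ∀ j, x j < p.m j ∧ x (j + 1) % p.m j = x j}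

instance (p : PeriodicStructure) : TopologicalSpace p.space :=
  inferInstanceAs (TopologicalSpace
    {x : ℕ → ℕ // ∀ j, x j < p.m j ∧ x (j + 1) % p.m j = x j})

/-- The odometer map `g_m` (adding 1 coordinatewise mod `m j`). -/
def PeriodicStructure.step (p : PeriodicStructure) (x : p.space) : p.space :=
  ⟨fun j => (x.1 j + 1) % p.m j, by
    intro j
    refine ⟨Nat.mod_lt _ (p.pos j), ?_⟩
    show (x.1 (j + 1) + 1) % p.m (j + 1) % p.m j = (x.1 j + 1) % p.m j
    rw [Nat.mod_mod_of_dvd _ (p.dvd j), ← (x.2 j).2, Nat.add_mod]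
    exact Nat.add_mod_mod _ _ _⟩

/-- `S` is an odometer for `f`: `f` restricted to `S` is topologically conjugate to
an odometer `g_m : X_m → X_m`. -/
def IsOdometer {X : Type*} [TopologicalSpace X] (f : X → X) (S : Set X) : Prop :=
  ∃ p : PeriodicStructure, ∃ h : p.space ≃ₜ S,
    ∀ z : p.space, f ((h z : X)) = ((h (p.step z) : X))

/-- `S` is a periodic orbit of `f`. -/
def IsPeriodicOrbit {X : Type*} (f : X → X) (S : Set X) : Prop :=
  ∃ x ∈ S, ∃ i : ℕ, 0 < i ∧ f^[i] x = x ∧ S = {y | ∃ j < i, f^[j] x = y}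

/-- The ω-limit set of a sequence of points. -/
def omegaLimitSeq {X : Type*} [TopologicalSpace X] (x : ℕ → X) : Set X :=
  {y | ∃ φ : ℕ → ℕ, StrictMono φ ∧
    Filter.Tendsto (fun j => x (φ j)) Filter.atTop (nhds y)}

/-- The ω-limit set `ω(x, f)` of a point. -/
def omegaLimitPt {X : Type*} [TopologicalSpace X] (f : X → X) (x : X) : Set X :=
  omegaLimitSeq fun i => f^[i] x

/-- `M` is a minimal set for `f`. -/
def IsMinimalSet {X : Type*} [TopologicalSpace X] (f : X → X) (M : Set X) : Prop :=
  M.Nonempty ∧ IsClosed M ∧ Set.MapsTo f M M ∧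
    ∀ S ⊆ M, IsClosed S → Set.MapsTo f S S → S = ∅ ∨ S = M

/-- `x` is a minimal point for `f`. -/
def IsMinimalPoint {X : Type*} [TopologicalSpace X] (f : X → X) (x : X) : Prop :=
  IsMinimalSet f (closure (Set.range fun i => f^[i] x))

/-- `x` is a regularly recurrent point for `f`. -/
def RegularlyRecurrent {X : Type*} [PseudoMetricSpace X] (f : X → X) (x : X) : Prop :=
  ∀ ε > 0, ∃ n : ℕ, 0 < n ∧ ∀ k : ℕ, dist x (f^[k * n] x) ≤ ε

/-- `f` has the shadowing property. -/
def ShadowingProperty {X : Type*} [PseudoMetricSpace X] (f : X → X) : Prop :=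
  ∀ ε > 0, ∃ δ > 0, ∀ ξ : ℕ → X,
    (∀ i, dist (f (ξ i)) (ξ (i + 1)) ≤ δ) → ∃ y, ∀ i, dist (f^[i] y) (ξ i) ≤ ε

namespace OdoProof


set_option linter.unusedSectionVars false

variable {X : Type*} [MetricSpace X] [CompactSpace X] {f : X → X}

def W (f : X → X) (m : ℕ) (y : X) : Set X :=
  closure (Set.range fun k => f^[k * m] y)

lemma isClosed_W (f : X → X) (m : ℕ) (y : X) : IsClosed (W f m y) := isClosed_closure

lemma mem_W_self (f : X → X) (m : ℕ) (y : X) : y ∈ W f m y :=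
  subset_closure ⟨0, by simp⟩

lemma iterate_mem_W (f : X → X) (m k : ℕ) (y : X) : f^[k * m] y ∈ W f m y :=
  subset_closure ⟨k, rfl⟩

lemma W_anti (f : X → X) {m m' : ℕ} (h : m ∣ m') (y : X) : W f m' y ⊆ W f m y := by
  apply closure_mono
  rintro _ ⟨k, rfl⟩
  obtain ⟨c, rfl⟩ := h
  refine ⟨k * c, ?_⟩
  show f^[k * c * m] y = f^[k * (m * c)] y
  rw [show k * c * m = k * (m * c) by ring]

lemma mem_W_iterate_of_mem (hf : Continuous f) {m : ℕ} {y z : X} (hz : z ∈ W f m y) (j : ℕ) :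
    f^[j * m] z ∈ W f m y := by
  have h1 : Set.MapsTo f^[j * m] (Set.range fun k => f^[k * m] y) (W f m y) := by
    rintro _ ⟨k, rfl⟩
    rw [← Function.iterate_add_apply, show j * m + k * m = (j + k) * m by ring]
    exact iterate_mem_W f m (j + k) y
  have h2 := h1.closure (hf.iterate (j * m))
  rw [IsClosed.closure_eq (isClosed_W f m y)] at h2
  exact h2 hz

lemma W_subset_of_mem (hf : Continuous f) {m : ℕ} {y z : X} (hz : z ∈ W f m y) :
    W f m z ⊆ W f m y := by
  apply closure_minimal ?_ (isClosed_W f m y)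
  rintro _ ⟨k, rfl⟩
  exact mem_W_iterate_of_mem hf hz k

lemma uc_iter (hf : Continuous f) (N : ℕ) {η : ℝ} (hη : 0 < η) :
    ∃ δ > 0, ∀ s ≤ N, ∀ u v : X, dist u v ≤ δ → dist (f^[s] u) (f^[s] v) ≤ η := by
  induction N with
  | zero =>
    refine ⟨η, hη, ?_⟩
    intro s hs u v h
    interval_cases s
    simpa using h
  | succ N ih =>
    obtain ⟨δ₁, hδ₁, h1⟩ := ih
    have huc : UniformContinuous f^[N + 1] :=
      CompactSpace.uniformContinuous_of_continuous (hf.iterate (N + 1))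
    rw [Metric.uniformContinuous_iff] at huc
    obtain ⟨δ₂, hδ₂, h2⟩ := huc η hη
    refine ⟨min δ₁ (δ₂ / 2), by positivity, ?_⟩
    intro s hs u v hd
    rcases Nat.lt_or_ge s (N + 1) with h | h
    · exact h1 s (by omega) u v (hd.trans (min_le_left _ _))
    · have hs' : s = N + 1 := by omega
      subst hs'
      exact (h2 (lt_of_le_of_lt (hd.trans (min_le_right _ _)) (by linarith))).le

lemma mem_W_symm (hf : Continuous f) {y : X} (hy : RegularlyRecurrent f y)
    (m : ℕ) {z : X} (hz : z ∈ W f m y) : y ∈ W f m z := by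
  rw [W, Metric.mem_closure_iff]
  intro ε hε
  obtain ⟨n, hn, hret⟩ := hy (ε / 3) (by positivity)
  obtain ⟨δ, hδ, hucc⟩ := uc_iter hf (n * m) (show (0:ℝ) < ε / 3 by positivity)
  obtain ⟨b, ⟨k, rfl⟩, hbd⟩ := Metric.mem_closure_iff.mp hz δ hδ
  set j := n - k % n with hj
  have hjn : j ≤ n := Nat.sub_le _ _
  have hmodlt : k % n < n := Nat.mod_lt _ hn
  have hdm : n * (k / n) + k % n = k := Nat.div_add_mod k n
  have hdvd : k + j = (k / n + 1) * n := by
    have : (k / n + 1) * n = n * (k / n) + n := by ring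
    omega
  refine ⟨f^[j * m] z, ⟨j, rfl⟩, ?_⟩
  have e1 : f^[j * m] (f^[k * m] y) = f^[(k + j) * m] y := by
    rw [← Function.iterate_add_apply]
    congr 1
    ring
  have hA : dist y (f^[(k + j) * m] y) ≤ ε / 3 := by
    rw [hdvd, show (k / n + 1) * n * m = ((k / n + 1) * m) * n by ring]
    exact hret _
  have hB : dist (f^[j * m] (f^[k * m] y)) (f^[j * m] z) ≤ ε / 3 := by
    apply hucc (j * m) (Nat.mul_le_mul_right m hjn)
    rw [dist_comm]
    exact hbd.le
  calc dist y (f^[j * m] z)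
      ≤ dist y (f^[(k + j) * m] y) + dist (f^[(k + j) * m] y) (f^[j * m] z) := dist_triangle _ _ _
    _ ≤ ε / 3 + ε / 3 := by
        refine add_le_add hA ?_
        rw [← e1]
        exact hB
    _ < ε := by linarith

lemma W_eq_of_mem (hf : Continuous f) {y : X} (hy : RegularlyRecurrent f y) {m : ℕ} {z : X}
    (hz : z ∈ W f m y) : W f m z = W f m y :=
  (W_subset_of_mem hf hz).antisymm (W_subset_of_mem hf (mem_W_symm hf hy m hz))

lemma image_closure_eq (hf : Continuous f) (S : Set X) : f '' closure S = closure (f '' S) :=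
  Subset.antisymm (image_closure_subset_closure_image hf)
    (closure_minimal (image_mono (f := f) subset_closure)
      ((isClosed_closure.isCompact.image hf).isClosed))

lemma image_W (hf : Continuous f) (m : ℕ) (y : X) : f '' W f m y = W f m (f y) := by
  rw [W, image_closure_eq hf, W]
  congr 1
  have : (f ∘ fun k => f^[k * m] y) = fun k => f^[k * m] (f y) := by
    funext k
    show f (f^[k * m] y) = f^[k * m] (f y)
    rw [← Function.iterate_succ_apply' f (k * m) y, Function.iterate_succ_apply]
  rw [← Set.range_comp, this]

lemma image_iterate_W (hf : Continuous f) (s m : ℕ) (y : X) :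
    f^[s] '' W f m y = W f m (f^[s] y) := by
  induction s with
  | zero => simp
  | succ s ih =>
    rw [Function.iterate_succ', Set.image_comp, ih, image_W hf]
    rfl


lemma orbit_dense (hf : Continuous f) (hmin : IsMinimalSet f Set.univ) (y u : X) :
    u ∈ closure (Set.range fun i => f^[i] y) := by
  have hS : Set.MapsTo f (closure (Set.range fun i => f^[i] y))
      (closure (Set.range fun i => f^[i] y)) := by
    have h0 : Set.MapsTo f (Set.range fun i => f^[i] y) (Set.range fun i => f^[i] y) := by
      rintro _ ⟨i, rfl⟩
      exact ⟨i + 1, Function.iterate_succ_apply' f i y⟩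
    exact h0.closure hf
  rcases hmin.2.2.2 _ (Set.subset_univ _) isClosed_closure hS with h | h
  · exact absurd (h ▸ subset_closure ⟨0, by simp⟩ : y ∈ (∅ : Set X)) (Set.notMem_empty y)
  · rw [h]; trivial

end OdoProof

open OdoProof in
theorem minimal_rr_periodic_or_odometer {X : Type*} [MetricSpace X] [CompactSpace X]
    (f : X → X) (hf : Continuous f) (hmin : IsMinimalSet f Set.univ)
    (hrr : ∀ x : X, RegularlyRecurrent f x) :
    IsPeriodicOrbit f Set.univ ∨ IsOdometer f Set.univ := by
  classical
  by_cases hper : ∃ x : X, ∃ i : ℕ, 0 < i ∧ f^[i] x = x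
  · left
    obtain ⟨x, i, hi, hfix⟩ := hper
    refine ⟨x, Set.mem_univ x, i, hi, hfix, ?_⟩
    have hSclosed : IsClosed {y : X | ∃ j < i, f^[j] x = y} := by
      have : {y : X | ∃ j < i, f^[j] x = y} = (fun j => f^[j] x) '' {j | j < i} := by
        ext y; simp [Set.mem_image]
      rw [this]
      exact ((Set.finite_Iio i).image _).isClosed
    have hSmaps : Set.MapsTo f {y : X | ∃ j < i, f^[j] x = y} {y : X | ∃ j < i, f^[j] x = y} := by
      rintro _ ⟨j, hj, rfl⟩
      by_cases h : j + 1 < i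
      · exact ⟨j + 1, h, Function.iterate_succ_apply' f j x⟩
      · have hji : j + 1 = i := by omega
        refine ⟨0, hi, ?_⟩
        simp only [Function.iterate_zero, id_eq]
        rw [← Function.iterate_succ_apply' f j x]
        simp only [Nat.succ_eq_add_one, hji, hfix]
    rcases hmin.2.2.2 _ (Set.subset_univ _) hSclosed hSmaps with h | h
    · exact absurd (h ▸ (⟨0, hi, rfl⟩ : x ∈ {y : X | ∃ j < i, f^[j] x = y}) : x ∈ (∅ : Set X))
        (Set.notMem_empty x)
    · exact h.symm
  · right
    push_neg at hper
    obtain ⟨x₀, -⟩ := hmin.1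
    have Hper : ∀ j : ℕ, ∃ n, 0 < n ∧ ∀ k, dist x₀ (f^[k * n] x₀) ≤ 1 / (j + 1 : ℝ) :=
      fun j => hrr x₀ _ (by positivity)
    choose r hrpos hrdist using Hper
    set m : ℕ → ℕ := fun j => Nat.rec (r 0) (fun i acc => acc * (i + 1) * r (i + 1)) j with hm
    have hmsucc : ∀ j, m (j + 1) = m j * (j + 1) * r (j + 1) := fun j => rfl
    have hmpos : ∀ j, 0 < m j := by
      intro j
      induction j with
      | zero => exact hrpos 0
      | succ j ih => rw [hmsucc]; exact Nat.mul_pos (Nat.mul_pos ih (Nat.succ_pos j)) (hrpos (j + 1))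
    have hmdvd : ∀ j, m j ∣ m (j + 1) := fun j =>
      ⟨(j + 1) * r (j + 1), by rw [hmsucc]; ring⟩
    have hmchain : ∀ {j j'}, j ≤ j' → m j ∣ m j' := by
      intro j j' h
      induction h with
      | refl => exact dvd_refl _
      | step _ ih => exact ih.trans (hmdvd _)
    have hrdvd : ∀ j, r j ∣ m j := by
      intro j
      cases j with
      | zero => exact dvd_refl _
      | succ j => rw [hmsucc]; exact dvd_mul_left _ _
    have hfacdvd : ∀ n, 0 < n → n ∣ m n := by
      intro n hn
      cases n with
      | zero => omega
      | succ n => rw [hmsucc]; exact ⟨m n * r (n + 1), by ring⟩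
    -- separation: points in all W-classes of y equal y
    have hsep : ∀ y z : X, (∀ j, z ∈ W f (m j) y) → z = y := by
      intro y z hz
      by_contra hne
      have hd : 0 < dist z y := dist_pos.mpr hne
      obtain ⟨n, hn, hret⟩ := hrr y (dist z y / 2) (by positivity)
      have h1 : W f (m n) y ⊆ W f n y := W_anti f (hfacdvd n hn) y
      have h2 : W f n y ⊆ Metric.closedBall y (dist z y / 2) := by
        apply closure_minimal ?_ Metric.isClosed_closedBall
        rintro _ ⟨k, rfl⟩
        rw [Metric.mem_closedBall, dist_comm]
        exact hret k
      have h3 := h2 (h1 (hz n))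
      rw [Metric.mem_closedBall] at h3
      linarith
    -- level periods
    have hWm : ∀ j, W f (m j) (f^[m j] x₀) = W f (m j) x₀ := by
      intro j
      apply W_eq_of_mem hf (hrr x₀)
      simpa using iterate_mem_W f (m j) 1 x₀
    have hfindex : ∀ j, ∃ t, 0 < t ∧ W f (m j) (f^[t] x₀) = W f (m j) x₀ :=
      fun j => ⟨m j, hmpos j, hWm j⟩
    set nn : ℕ → ℕ := fun j => Nat.find (hfindex j) with hnn_def
    have hnn : ∀ j, 0 < nn j ∧ W f (m j) (f^[nn j] x₀) = W f (m j) x₀ :=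
      fun j => Nat.find_spec (hfindex j)
    have hnnpos : ∀ j, 0 < nn j := fun j => (hnn j).1
    have hnmin : ∀ j t, 0 < t → W f (m j) (f^[t] x₀) = W f (m j) x₀ → nn j ≤ t := by
      intro j t ht hW
      by_contra h
      push_neg at h
      exact Nat.find_min (hfindex j) h ⟨ht, hW⟩
    have hshift : ∀ j t, W f (m j) (f^[t + nn j] x₀) = W f (m j) (f^[t] x₀) := by
      intro j t
      rw [Function.iterate_add_apply, ← image_iterate_W hf, (hnn j).2, image_iterate_W hf]
    have hmod : ∀ j t, W f (m j) (f^[t] x₀) = W f (m j) (f^[t % nn j] x₀) := by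
      intro j t
      have key : ∀ q rr, W f (m j) (f^[nn j * q + rr] x₀) = W f (m j) (f^[rr] x₀) := by
        intro q
        induction q with
        | zero => simp
        | succ q ih =>
          intro rr
          rw [show nn j * (q + 1) + rr = (nn j * q + rr) + nn j by ring, hshift, ih]
      conv_lhs => rw [← Nat.div_add_mod t (nn j)]
      exact key _ _
    have hndvd : ∀ j, nn j ∣ m j := by
      intro j
      have h1 : W f (m j) (f^[m j % nn j] x₀) = W f (m j) x₀ := by
        rw [← hmod]
        exact hWm j
      rcases Nat.eq_zero_or_pos (m j % nn j) with h0 | hpos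
      · exact Nat.dvd_of_mod_eq_zero h0
      · exact absurd (hnmin j _ hpos h1) (Nat.not_le.mpr (Nat.mod_lt _ (hnnpos j)))
    -- disjointness of classes
    have hdisj0 : ∀ j i i', i < i' → i' < nn j →
        (W f (m j) (f^[i] x₀) ∩ W f (m j) (f^[i'] x₀)).Nonempty → False := by
      intro j i i' hii hi' ⟨w, hw1, hw2⟩
      have e1 : W f (m j) (f^[i] x₀) = W f (m j) (f^[i'] x₀) := by
        rw [← W_eq_of_mem hf (hrr _) hw1, ← W_eq_of_mem hf (hrr _) hw2]
      have e2 : W f (m j) (f^[nn j - i' + i] x₀) = W f (m j) x₀ := by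
        have := congrArg (fun S => f^[nn j - i'] '' S) e1
        simp only [image_iterate_W hf] at this
        rw [← Function.iterate_add_apply, ← Function.iterate_add_apply] at this
        rw [show nn j - i' + i' = nn j by omega] at this
        rw [this, (hnn j).2]
      have hlt : nn j - i' + i < nn j := by omega
      have hpos' : 0 < nn j - i' + i := by omega
      exact absurd (hnmin j _ hpos' e2) (Nat.not_le.mpr hlt)
    have hdisj : ∀ j (y : X) i i', i < nn j → i' < nn j →
        y ∈ W f (m j) (f^[i] x₀) → y ∈ W f (m j) (f^[i'] x₀) → i = i' := by
      intro j y i i' hi hi' h1 h2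
      rcases lt_trichotomy i i' with h | h | h
      · exact absurd ⟨y, h1, h2⟩ fun hc => hdisj0 j i i' h hi' hc
      · exact h
      · exact absurd ⟨y, h2, h1⟩ fun hc => hdisj0 j i' i h hi hc
    -- cover
    have hcover : ∀ j (y : X), ∃ i, i < nn j ∧ y ∈ W f (m j) (f^[i] x₀) := by
      intro j y
      have hy : y ∈ closure (Set.range fun i => f^[i] x₀) := orbit_dense hf hmin x₀ y
      have hsub : closure (Set.range fun i => f^[i] x₀) ⊆
          ⋃ i ∈ Finset.range (nn j), W f (m j) (f^[i] x₀) := by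
        apply closure_minimal ?_ (isClosed_biUnion_finset fun i _ => isClosed_W f (m j) _)
        rintro _ ⟨t, rfl⟩
        have hmem : f^[t] x₀ ∈ W f (m j) (f^[t % nn j] x₀) := by
          rw [← hmod]
          exact mem_W_self f (m j) _
        exact Set.mem_biUnion (Finset.mem_range.mpr (Nat.mod_lt _ (hnnpos j))) hmem
      obtain ⟨i, hi, hmem⟩ := Set.mem_iUnion₂.mp (hsub hy)
      exact ⟨i, Finset.mem_range.mp hi, hmem⟩
    choose a halt hamem using hcover
    have hauniq : ∀ j (y : X) i, i < nn j → y ∈ W f (m j) (f^[i] x₀) → a j y = i :=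
      fun j y i hi hmem => hdisj j y _ i (halt j y) hi (hamem j y) hmem
    have hacompat : ∀ j y, a (j + 1) y % nn j = a j y := by
      intro j y
      have h1 : y ∈ W f (m j) (f^[a (j + 1) y % nn j] x₀) := by
        rw [← hmod]
        exact W_anti f (hmdvd j) _ (hamem (j + 1) y)
      exact (hauniq j y _ (Nat.mod_lt _ (hnnpos j)) h1).symm
    have hnndvd : ∀ j, nn j ∣ nn (j + 1) := by
      intro j
      have h1 : f^[nn (j + 1)] x₀ ∈ W f (m j) x₀ := by
        have h2 := mem_W_self f (m (j + 1)) (f^[nn (j + 1)] x₀)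
        rw [(hnn (j + 1)).2] at h2
        exact W_anti f (hmdvd j) x₀ h2
      have h2 : W f (m j) (f^[nn (j + 1) % nn j] x₀) = W f (m j) x₀ := by
        rw [← hmod]
        exact W_eq_of_mem hf (hrr x₀) h1
      rcases Nat.eq_zero_or_pos (nn (j + 1) % nn j) with h0 | hpos
      · exact Nat.dvd_of_mod_eq_zero h0
      · exact absurd (hnmin j _ hpos h2) (Nat.not_le.mpr (Nat.mod_lt _ (hnnpos j)))
    have hnmono : Monotone nn :=
      monotone_nat_of_le_succ fun j => Nat.le_of_dvd (hnnpos (j + 1)) (hnndvd j)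
    -- stabilization gives a periodic point, contradiction
    have hstab : ∀ j₀, (∀ j, j₀ ≤ j → nn j = nn j₀) → False := by
      intro j₀ hconst
      apply hper x₀ (nn j₀) (hnnpos j₀)
      apply hsep x₀ (f^[nn j₀] x₀)
      intro j
      rcases le_total j₀ j with h | h
      · have h1 := (hnn j).2
        rw [hconst j h] at h1
        rw [← h1]
        exact mem_W_self f (m j) _
      · have h1 : f^[nn j₀] x₀ ∈ W f (m j₀) x₀ := by
          rw [← (hnn j₀).2]
          exact mem_W_self f (m j₀) _
        exact W_anti f (hmchain h) x₀ h1
    have hunb : ∀ b, ∃ j, b ≤ nn j := by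
      intro b
      induction b with
      | zero => exact ⟨0, Nat.zero_le _⟩
      | succ b ih =>
        obtain ⟨j, hj⟩ := ih
        by_contra hcon
        push_neg at hcon
        apply hstab j
        intro j' hj'
        have h1 := hnmono hj'
        have h2 := hcon j'
        have h3 := hcon j
        omega
    have htend : Filter.Tendsto nn Filter.atTop Filter.atTop :=
      tendsto_atTop_atTop_of_monotone hnmono hunb
    refine ⟨⟨nn, hnnpos, hnndvd, htend⟩, ?_⟩
    set p : PeriodicStructure := ⟨nn, hnnpos, hnndvd, htend⟩ with hp
    have hψmem : ∀ y : X, ∀ j, a j y < p.m j ∧ a (j + 1) y % p.m j = a j y :=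
      fun y j => ⟨halt j y, hacompat j y⟩
    set ψ : X → p.space := fun y => ⟨fun j => a j y, hψmem y⟩ with hψ
    have hinj : Function.Injective ψ := by
      intro y z hyz
      have haeq : ∀ j, a j y = a j z := fun j => congrFun (congrArg Subtype.val hyz) j
      refine (hsep y z ?_).symm
      intro j
      have h1 : y ∈ W f (m j) (f^[a j y] x₀) := hamem j y
      have h2 : z ∈ W f (m j) (f^[a j y] x₀) := by
        rw [haeq j]
        exact hamem j z
      rwa [W_eq_of_mem hf (hrr _) h1]
    have hsurj : Function.Surjective ψ := by
      intro b
      have hnested : ∀ j, W f (m (j + 1)) (f^[b.1 (j + 1)] x₀) ⊆ W f (m j) (f^[b.1 j] x₀) := by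
        intro j
        have h1 : W f (m (j + 1)) (f^[b.1 (j + 1)] x₀) ⊆ W f (m j) (f^[b.1 (j + 1)] x₀) :=
          W_anti f (hmdvd j) _
        rw [hmod j (b.1 (j + 1)), (b.2 j).2] at h1
        exact h1
      obtain ⟨y, hy⟩ := IsCompact.nonempty_iInter_of_sequence_nonempty_isCompact_isClosed
        (fun j => W f (m j) (f^[b.1 j] x₀)) hnested
        (fun j => ⟨_, mem_W_self f (m j) _⟩)
        ((isClosed_W f (m 0) _).isCompact)
        (fun j => isClosed_W f (m j) _)
      refine ⟨y, ?_⟩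
      apply Subtype.ext
      funext j
      exact hauniq j y (b.1 j) (b.2 j).1 (Set.mem_iInter.mp hy j)
    have hconj : ∀ y : X, ψ (f y) = p.step (ψ y) := by
      intro y
      apply Subtype.ext
      funext j
      show a j (f y) = (a j y + 1) % nn j
      apply hauniq j (f y) _ (Nat.mod_lt _ (hnnpos j))
      have h1 : f y ∈ W f (m j) (f^[a j y + 1] x₀) := by
        have h2 := Set.mem_image_of_mem f (hamem j y)
        rw [image_W hf] at h2
        rwa [← Function.iterate_succ_apply' f (a j y) x₀] at h2
      rwa [hmod j (a j y + 1)] at h1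
    -- continuity of ψ
    have hfiber : ∀ j i, i < nn j → {y : X | a j y = i} = W f (m j) (f^[i] x₀) := by
      intro j i hi
      ext y
      constructor
      · rintro rfl
        exact hamem j y
      · intro hmem
        exact hauniq j y i hi hmem
    have hopen : ∀ j i, IsOpen {y : X | a j y = i} := by
      intro j i
      by_cases hi : i < nn j
      · have hcompl : {y : X | a j y = i} =
            (⋃ i' ∈ (Finset.range (nn j)).erase i, W f (m j) (f^[i'] x₀))ᶜ := by
          ext y
          simp only [Set.mem_compl_iff, Set.mem_iUnion, not_exists, Set.mem_setOf_eq]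
          constructor
          · rintro rfl i' hi' hmem
            have h1 := Finset.mem_erase.mp hi'
            exact h1.1 (hauniq j y i' (Finset.mem_range.mp h1.2) hmem).symm
          · intro h
            by_contra hne
            exact h (a j y) (Finset.mem_erase.mpr ⟨fun hc => hne hc,
              Finset.mem_range.mpr (halt j y)⟩) (hamem j y)
        rw [hcompl]
        exact (isClosed_biUnion_finset fun i' _ => isClosed_W f (m j) _).isOpen_compl
      · have : {y : X | a j y = i} = ∅ := by
          ext y
          simp only [Set.mem_setOf_eq, Set.mem_empty_iff_false, iff_false]
          intro hc
          exact hi (hc ▸ halt j y)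
        rw [this]
        exact isOpen_empty
    have hcont : Continuous ψ := by
      apply Continuous.subtype_mk
      apply continuous_pi
      intro j
      have : IsLocallyConstant fun y => a j y := by
        intro s
        have hpre : (fun y => a j y) ⁻¹' s =
            ⋃ i ∈ (Finset.range (nn j)).filter (fun i => i ∈ s), {y : X | a j y = i} := by
          ext y
          simp only [Set.mem_preimage, Set.mem_iUnion, Finset.mem_filter, Finset.mem_range,
            Set.mem_setOf_eq]
          constructor
          · intro h
            exact ⟨a j y, ⟨⟨halt j y, h⟩, rfl⟩⟩
          · rintro ⟨i, ⟨⟨-, his⟩, rfl⟩⟩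
            exact his
        rw [hpre]
        exact isOpen_biUnion fun i _ => hopen j i
      exact this.continuous
    haveI hT2 : T2Space p.space :=
      inferInstanceAs (T2Space {x : ℕ → ℕ // ∀ j, x j < p.m j ∧ x (j + 1) % p.m j = x j})
    let E : X ≃ₜ p.space :=
      Continuous.homeoOfEquivCompactToT2 (f := Equiv.ofBijective ψ ⟨hinj, hsurj⟩) hcont
    refine ⟨E.symm.trans (Homeomorph.Set.univ X).symm, ?_⟩
    intro z
    show f ((Homeomorph.Set.univ X).symm (E.symm z) : X) =
      ((Homeomorph.Set.univ X).symm (E.symm (p.step z)) : X)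
    have hcoe : ∀ x : X, ((Homeomorph.Set.univ X).symm x : X) = x := fun _ => rfl
    rw [hcoe, hcoe]
    apply hinj
    have hEψ : ∀ x : X, E x = ψ x := fun _ => rfl
    have h1 : ψ (E.symm z) = z := by
      rw [← hEψ]
      exact E.apply_symm_apply z
    have h2 : ψ (E.symm (p.step z)) = p.step z := by
      rw [← hEψ]
      exact E.apply_symm_apply _
    rw [hconj (E.symm z), h1, h2]
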